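/- Let G be a group, let H ⊆ H' be subgroups of G, let s ∈ H with s² = 1 and s ≠ 1, and let t ∈ G. Assume: (i) conjugation by t preserves H, i.e., t·H·t⁻¹ = H; (ii) tⁿ ∈ H' for every integer n; (iii) every u ∈ H' commuting with s satisfies u = 1 or u = s; (iv) for every nonzero integer n, tⁿ ∉ H and tⁿ·s ∉ H. Then for all integers m ≠ n, the involutions t⁻ᵐ·s·tᵐ and t⁻ⁿ·s·tⁿ both lie in H but are not conjugate by any element of H (there is no α ∈ H with α·(t⁻ᵐ s tᵐ)·α⁻¹ = t⁻ⁿ s tⁿ). In particular, H contains infinitely many pairwise non-conjugate involutions, hence infinitely many conjugacy classes of involutions. -/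

import Mathlib

/-- Group-theoretic core of the existence of infinitely many conjugacy classes of
involutions: under hypotheses (i)-(iv), the involutions `t⁻ᵐ s tᵐ` (for `m : ℤ`) all lie
in `H` and are pairwise non-conjugate in `H`. -/
theorem nonconjugate_involutions {G : Type*} [Group G] (H H' : Subgroup G)
    (hHH' : H ≤ H') (s : G) (hs2 : s ^ 2 = 1) (hs1 : s ≠ 1) (t : G)
    (hconj : ∀ h : G, h ∈ H → t * h * t⁻¹ ∈ H)
    (hconj' : ∀ h : G, t * h * t⁻¹ ∈ H → h ∈ H)
    (ht : ∀ n : ℤ, t ^ n ∈ H')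
    (hcent : ∀ u : G, u ∈ H' → u * s = s * u → u = 1 ∨ u = s)
    (hne : ∀ n : ℤ, n ≠ 0 → t ^ n ∉ H ∧ t ^ n * s ∉ H)
    (hsH : s ∈ H) :
    ∀ m n : ℤ, m ≠ n →
      t ^ (-m) * s * t ^ m ∈ H ∧ t ^ (-n) * s * t ^ n ∈ H ∧
      ¬ ∃ α ∈ H, α * (t ^ (-m) * s * t ^ m) * α⁻¹ = t ^ (-n) * s * t ^ n := by
  have key : ∀ k : ℤ, ∀ h : G, h ∈ H → t ^ k * h * (t ^ k)⁻¹ ∈ H := by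
    intro k
    induction k using Int.induction_on with
    | zero => intro h hh; simpa using hh
    | succ i ih =>
        intro h hh
        have h1 := hconj _ (ih h hh)
        have e : t ^ ((i : ℤ) + 1) * h * (t ^ ((i : ℤ) + 1))⁻¹
            = t * (t ^ (i : ℤ) * h * (t ^ (i : ℤ))⁻¹) * t⁻¹ := by
          rw [zpow_add_one]; group
        rw [e]; exact h1
    | pred i ih =>
        intro h hh
        apply hconj'
        have e : t * (t ^ (-(i : ℤ) - 1) * h * (t ^ (-(i : ℤ) - 1))⁻¹) * t⁻¹
            = t ^ (-(i : ℤ)) * h * (t ^ (-(i : ℤ)))⁻¹ := by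
          rw [zpow_sub_one]; group
        rw [e]; exact ih h hh
  have memH : ∀ k : ℤ, t ^ (-k) * s * t ^ k ∈ H := by
    intro k
    have := key (-k) s hsH
    simpa [zpow_neg] using this
  intro m n hmn
  refine ⟨memH m, memH n, ?_⟩
  rintro ⟨α, hα, hαeq⟩
  set u : G := t ^ n * α * t ^ (-m) with hu_def
  have huH' : u ∈ H' := H'.mul_mem (H'.mul_mem (ht n) (hHH' hα)) (ht (-m))
  have hu : u * s * u⁻¹ = t ^ n * (α * (t ^ (-m) * s * t ^ m) * α⁻¹) * t ^ (-n) := by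
    rw [hu_def]; group
  rw [hαeq] at hu
  have hu' : u * s * u⁻¹ = s := by rw [hu]; group
  have hcomm : u * s = s * u := by
    conv_rhs => rw [← hu']
    group
  rcases hcent u huH' hcomm with hu1 | hu2
  · -- u = 1 : then α = t^(m-n) ∈ H, contradiction
    have hα' : α = t ^ (-n) * u * t ^ m := by rw [hu_def]; group
    rw [hu1, mul_one] at hα'
    rw [← zpow_add] at hα'
    exact (hne (-n + m) (by omega)).1 (hα' ▸ hα)
  · -- u = s : then t^n α t^(-n) = s * t^(m-n), so t^(m-n) ∈ H, contradiction
    have h1 : t ^ n * α * (t ^ n)⁻¹ ∈ H := key n α hα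
    have h2 : t ^ n * α * (t ^ n)⁻¹ = u * (t ^ m * t ^ (-n)) := by rw [hu_def]; group
    rw [hu2] at h2
    have h3 : s⁻¹ * (t ^ n * α * (t ^ n)⁻¹) ∈ H := H.mul_mem (H.inv_mem hsH) h1
    rw [h2, inv_mul_cancel_left, ← zpow_add] at h3
    exact (hne (m + -n) (by omega)).1 h3
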